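/- Explicit integral formula for the dynamic relay on intervals where the input stays below the lower threshold (eq. (2.15), second case): Let y be a dynamic relay solution for (u, ξ), and let [a,b] ⊆ [0,T] be such that u(s) ≤ ρ₁ for a.e. s ∈ [a,b]. Then for every t ∈ [a,b], y(t) = max{ −1, y(a) + ∫_a^t k·(u(s) − ρ₁) ds }. -/

import Mathlib

open MeasureTheory Set

/-- The function `g(u) = k·(u − ρ₂)⁺ − k·(ρ₁ − u)⁺` driving the dynamic relay. -/
noncomputable def relayG (ρ₁ ρ₂ k u : ℝ) : ℝ :=
  k * max (u - ρ₂) 0 - k * max (ρ₁ - u) 0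

/-- `y` (with a.e. derivative `y'`) is a dynamic relay solution on `[0,T]` for input `u`
and initial state `ξ`: `y ∈ H¹(0,T)` (encoded by `y' ∈ L²(0,T)` together with the
fundamental-theorem-of-calculus representation), `y(0) = ξ`, `|y| ≤ 1` on `[0,T]`, and
`q(t) := g(u(t)) − y'(t)` satisfies `q(t)(z − y(t)) ≤ 0` for all `z ∈ [−1,1]`, a.e. `t`. -/
def IsDynRelay (T ρ₁ ρ₂ k : ℝ) (u : ℝ → ℝ) (ξ : ℝ) (y y' : ℝ → ℝ) : Prop :=
  MemLp y' 2 (volume.restrict (Ioc (0:ℝ) T)) ∧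
  y 0 = ξ ∧
  (∀ t ∈ Icc (0:ℝ) T, y t = ξ + ∫ s in (0:ℝ)..t, y' s) ∧
  (∀ t ∈ Icc (0:ℝ) T, |y t| ≤ 1) ∧
  (∀ᵐ t ∂(volume.restrict (Ioo (0:ℝ) T)),
    ∀ z ∈ Icc (-1:ℝ) 1, (relayG ρ₁ ρ₂ k (u t) - y' t) * (z - y t) ≤ 0)

/-- Explicit integral formula for the dynamic relay on intervals where the input stays
below the lower threshold (eq. (2.15), second case). -/
theorem dyn_relay_formula_below (T ρ₁ ρ₂ k : ℝ)
    (hT : 0 < T) (hρ : ρ₁ < ρ₂) (hk : 0 < k)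
    (u : ℝ → ℝ) (hu : MemLp u 2 (volume.restrict (Ioc (0:ℝ) T)))
    (ξ : ℝ) (hξ : ξ ∈ Icc (-1:ℝ) 1)
    (y y' : ℝ → ℝ) (hy : IsDynRelay T ρ₁ ρ₂ k u ξ y y')
    (a b : ℝ) (ha : 0 ≤ a) (hab : a ≤ b) (hb : b ≤ T)
    (hub : ∀ᵐ s ∂(volume.restrict (Icc a b)), u s ≤ ρ₁) :
    ∀ t ∈ Icc a b, y t = max (-1) (y a + ∫ s in a..t, k * (u s - ρ₁)) := by
  obtain ⟨hy'2, hy0, hrep, hbd, hVI⟩ := hy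
  haveI hfin : IsFiniteMeasure (volume.restrict (Ioc (0:ℝ) T)) :=
    ⟨by rw [Measure.restrict_apply_univ]; exact measure_Ioc_lt_top⟩
  have hy'int : IntegrableOn y' (Ioc 0 T) := hy'2.integrable (by norm_num)
  have huint : IntegrableOn u (Ioc 0 T) := hu.integrable (by norm_num)
  set f : ℝ → ℝ := fun s => k * (u s - ρ₁) with hfdef
  have hfint : IntegrableOn f (Ioc 0 T) :=
    (huint.sub (integrable_const _)).const_mul k
  -- interval integrability on subintervals of [0,T]
  have hIIy' : ∀ c d : ℝ, 0 ≤ c → c ≤ d → d ≤ T → IntervalIntegrable y' volume c d := by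
    intro c d hc hcd hd
    rw [intervalIntegrable_iff_integrableOn_Ioc_of_le hcd]
    exact hy'int.mono_set (Ioc_subset_Ioc hc hd)
  have hIIf : ∀ c d : ℝ, 0 ≤ c → c ≤ d → d ≤ T → IntervalIntegrable f volume c d := by
    intro c d hc hcd hd
    rw [intervalIntegrable_iff_integrableOn_Ioc_of_le hcd]
    exact hfint.mono_set (Ioc_subset_Ioc hc hd)
  -- y increments
  have hyinc : ∀ c d : ℝ, 0 ≤ c → c ≤ d → d ≤ T → y d - y c = ∫ s in c..d, y' s := by
    intro c d hc hcd hd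
    rw [hrep d ⟨hc.trans hcd, hd⟩, hrep c ⟨hc, hcd.trans hd⟩]
    have := intervalIntegral.integral_interval_sub_left
      (hIIy' 0 d (le_refl 0) (hc.trans hcd) hd) (hIIy' 0 c (le_refl 0) hc (hcd.trans hd))
    linarith [this]
  set w : ℝ → ℝ := fun s => y a + ∫ x in a..s, f x with hwdef
  -- w increments
  have hwinc : ∀ c d : ℝ, a ≤ c → c ≤ d → d ≤ b → w d - w c = ∫ s in c..d, f s := by
    intro c d hc hcd hd
    have := intervalIntegral.integral_interval_sub_left
      (hIIf a d ha (hc.trans hcd) ((hd.trans hb))) (hIIf a c ha hc ((hcd.trans hd).trans hb))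
    simp only [hwdef]
    linarith [this]
  -- a.e. facts on subintervals of (a,b)
  have key : ∀ c d : ℝ, a ≤ c → c ≤ d → d ≤ b →
      ∀ᵐ s ∂(volume.restrict (Ioo c d)),
        u s ≤ ρ₁ ∧ ∀ z ∈ Icc (-1:ℝ) 1, (f s - y' s) * (z - y s) ≤ 0 := by
    intro c d hc hcd hd
    have h1 : ∀ᵐ s ∂(volume.restrict (Ioo c d)), u s ≤ ρ₁ :=
      ae_restrict_of_ae_restrict_of_subset (Ioo_subset_Icc_self.trans (Icc_subset_Icc hc hd)) hub
    have h2 : ∀ᵐ s ∂(volume.restrict (Ioo c d)),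
        ∀ z ∈ Icc (-1:ℝ) 1, (relayG ρ₁ ρ₂ k (u s) - y' s) * (z - y s) ≤ 0 :=
      ae_restrict_of_ae_restrict_of_subset
        (Ioo_subset_Ioo (ha.trans hc) (hd.trans hb)) hVI
    filter_upwards [h1, h2] with s hs1 hs2
    refine ⟨hs1, fun z hz => ?_⟩
    have hg : relayG ρ₁ ρ₂ k (u s) = f s := by
      simp only [relayG, hfdef]
      rw [max_eq_right (by linarith), max_eq_left (by linarith)]
      ring
    rw [← hg]; exact hs2 z hz
  -- w is nonincreasing on [a,b]
  have hwmono : ∀ c d : ℝ, a ≤ c → c ≤ d → d ≤ b → w d ≤ w c := by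
    intro c d hc hcd hd
    have : ∫ s in c..d, f s ≤ 0 := by
      have hae : ∀ᵐ s ∂(volume.restrict (Icc c d)), f s ≤ 0 := by
        rw [← Measure.restrict_congr_set Ioo_ae_eq_Icc]
        filter_upwards [key c d hc hcd hd] with s hs
        have : u s - ρ₁ ≤ 0 := by linarith [hs.1]
        exact mul_nonpos_of_nonneg_of_nonpos hk.le this
      have := intervalIntegral.integral_mono_ae_restrict hcd
        (hIIf c d (ha.trans hc) hcd (hd.trans hb))
        (intervalIntegrable_const (c := (0:ℝ))) hae
      simpa using this
    linarith [hwinc c d hc hcd hd]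
  have hya1 : |y a| ≤ 1 := hbd a ⟨ha, hab.trans hb⟩
  intro t ht
  obtain ⟨hat, htb⟩ := ht
  have h0t : 0 ≤ t := ha.trans hat
  have htT : t ≤ T := htb.trans hb
  -- integral comparison lemma on [c,t]
  have hcomp : ∀ c : ℝ, a ≤ c → c ≤ t →
      (∀ s ∈ Ioo c t, y s < 1) → w t - w c ≤ y t - y c := by
    intro c hc hct hlt
    rw [hyinc c t (ha.trans hc) hct htT, hwinc c t hc hct htb]
    apply intervalIntegral.integral_mono_ae_restrict hct
      (hIIf c t (ha.trans hc) hct htT) (hIIy' c t (ha.trans hc) hct htT)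
    rw [← Measure.restrict_congr_set Ioo_ae_eq_Icc]
    filter_upwards [key c t hc hct htb, (ae_restrict_mem measurableSet_Ioo)] with s hs hmem
    have h1 := hs.2 1 ⟨by norm_num, le_refl 1⟩
    have hys := hlt s hmem
    nlinarith
  have hcomp' : ∀ c : ℝ, a ≤ c → c ≤ t →
      (∀ s ∈ Ioo c t, -1 < y s) → y t - y c ≤ w t - w c := by
    intro c hc hct hlt
    rw [hyinc c t (ha.trans hc) hct htT, hwinc c t hc hct htb]
    apply intervalIntegral.integral_mono_ae_restrict hct
      (hIIy' c t (ha.trans hc) hct htT) (hIIf c t (ha.trans hc) hct htT)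
    rw [← Measure.restrict_congr_set Ioo_ae_eq_Icc]
    filter_upwards [key c t hc hct htb, (ae_restrict_mem measurableSet_Ioo)] with s hs hmem
    have h1 := hs.2 (-1) ⟨le_refl (-1), by norm_num⟩
    have hys := hlt s hmem
    nlinarith
  -- continuity of y and w on relevant sets
  have hycont : ContinuousOn y (Icc 0 T) := by
    have hint : IntegrableOn y' (Icc 0 T) := by
      rw [IntegrableOn, ← Measure.restrict_congr_set Ioc_ae_eq_Icc]
      exact hy'int
    have hc := (intervalIntegral.continuousOn_primitive hint).add
      (continuousOn_const (c := ξ))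
    apply ContinuousOn.congr hc
    intro s hs
    rw [hrep s hs, intervalIntegral.integral_of_le hs.1]
    simp only [Pi.add_apply]
    ring
  have hycont' : ContinuousOn y (Icc a t) :=
    hycont.mono (Icc_subset_Icc ha htT)
  have hwcont : ContinuousOn w (Icc a t) := by
    have hint : IntegrableOn f (Icc a t) := by
      rw [IntegrableOn, ← Measure.restrict_congr_set Ioc_ae_eq_Icc]
      exact hfint.mono_set (Ioc_subset_Ioc ha htT)
    have hc := ((continuousOn_const (c := y a)).add
      (intervalIntegral.continuousOn_primitive hint))
    apply ContinuousOn.congr hc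
    intro s hs
    simp only [hwdef]
    rw [intervalIntegral.integral_of_le hs.1]
    rfl
  -- Lower bound: w t ≤ y t
  have hlow : w t ≤ y t := by
    set S : Set ℝ := Icc a t ∩ {s | w s ≤ y s} with hSdef
    have hSne : S.Nonempty := ⟨a, ⟨le_refl a, hat⟩, by simp [hwdef]⟩
    have hSclosed : IsClosed S := by
      have : S = Icc a t ∩ (fun s => y s - w s) ⁻¹' (Ici 0) := by
        ext s; simp [hSdef, sub_nonneg]
      rw [this]
      exact (hycont'.sub hwcont).preimage_isClosed_of_isClosed isClosed_Icc isClosed_Ici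
    have hScomp : IsCompact S :=
      isCompact_Icc.of_isClosed_subset hSclosed inter_subset_left
    set c := sSup S with hcdef
    have hcS : c ∈ S := hScomp.sSup_mem hSne
    have hct : c ≤ t := hcS.1.2
    have hac : a ≤ c := hcS.1.1
    rcases eq_or_lt_of_le hct with h | h
    · have := hcS.2; rwa [h] at this
    · have hlt : ∀ s ∈ Ioo c t, y s < 1 := by
        intro s hs
        have hsS : s ∉ S := fun hmem =>
          absurd (le_csSup hScomp.bddAbove hmem) (not_le.mpr hs.1)
        have hsIcc : s ∈ Icc a t := ⟨hac.trans hs.1.le, hs.2.le⟩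
        have : ¬ w s ≤ y s := fun hle => hsS ⟨hsIcc, hle⟩
        have hws : w s ≤ w a := hwmono a s (le_refl a) hsIcc.1 (hs.2.le.trans htb)
        have h2 : y s < w s := not_le.mp this
        have hwa : w a = y a := by simp [hwdef]
        linarith [(abs_le.mp hya1).2]
      have := hcomp c hac hct hlt
      have hwc : w c ≤ y c := hcS.2
      linarith
  have hge1 : -1 ≤ y t := (abs_le.mp (hbd t ⟨h0t, htT⟩)).1
  -- Upper bound: y t ≤ max (-1) (w t)
  have hup : y t ≤ max (-1) (w t) := by
    set S : Set ℝ := Icc a t ∩ {s | y s ≤ max (-1) (w s)} with hSdef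
    have hSne : S.Nonempty := by
      refine ⟨a, ⟨le_refl a, hat⟩, ?_⟩
      have : w a = y a := by simp [hwdef]
      simp only [mem_setOf_eq, this]
      exact le_max_right _ _
    have hSclosed : IsClosed S := by
      have : S = Icc a t ∩ (fun s => max (-1) (w s) - y s) ⁻¹' (Ici 0) := by
        ext s; simp [hSdef, sub_nonneg]
      rw [this]
      exact (((continuousOn_const (c := (-1:ℝ))).sup hwcont).sub
        hycont').preimage_isClosed_of_isClosed isClosed_Icc isClosed_Ici
    have hScomp : IsCompact S :=
      isCompact_Icc.of_isClosed_subset hSclosed inter_subset_left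
    set c := sSup S with hcdef
    have hcS : c ∈ S := hScomp.sSup_mem hSne
    have hct : c ≤ t := hcS.1.2
    have hac : a ≤ c := hcS.1.1
    rcases eq_or_lt_of_le hct with h | h
    · have := hcS.2; rwa [h] at this
    · have hlt : ∀ s ∈ Ioo c t, -1 < y s := by
        intro s hs
        have hsS : s ∉ S := fun hmem =>
          absurd (le_csSup hScomp.bddAbove hmem) (not_le.mpr hs.1)
        have hsIcc : s ∈ Icc a t := ⟨hac.trans hs.1.le, hs.2.le⟩
        have h1 : ¬ y s ≤ max (-1) (w s) := fun hle => hsS ⟨hsIcc, hle⟩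
        have := not_le.mp h1
        exact lt_of_le_of_lt (le_max_left _ _) this
      have hcmp := hcomp' c hac hct hlt
      have hwc : y c ≤ max (-1) (w c) := hcS.2
      have hwtc : w t ≤ w c := hwmono c t hac hct htb
      rcases le_or_gt (-1) (w c) with hcase | hcase
      · rw [max_eq_right hcase] at hwc
        calc y t ≤ y c + (w t - w c) := by linarith
        _ ≤ w t := by linarith
        _ ≤ max (-1) (w t) := le_max_right _ _
      · rw [max_eq_left hcase.le] at hwc
        calc y t ≤ y c + (w t - w c) := by linarith
        _ ≤ -1 + (w t - w c) := by linarith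
        _ ≤ -1 := by linarith
        _ ≤ max (-1) (w t) := le_max_left _ _
  -- conclude
  have : y t = max (-1) (w t) := le_antisymm hup (max_le hge1 hlow)
  simpa [hwdef, hfdef] using this
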